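/- Let $(X_i)$ be i.i.d. with law $\alpha$, and let $W, W' : S^k \to \mathbb{R}$ be symmetric measurable functions such that $\mathbb{E}[\exp(\lambda |W - W'|(X_1,\ldots,X_k))] < \infty$ for all $\lambda > 0$. Then for every $\delta, \lambda > 0$, $\frac{1}{n} \log \mathbb{P}\{ |U_n(W) - U_n(W')| > \delta \} \le -\lambda \delta + \frac{1}{k} \log \mathbb{E}[\exp(k C_k \lambda |W - W'|(X_1,\ldots,X_k))]$ for all $n \ge k$. -/

import Mathlib

open MeasureTheory ProbabilityTheory Real Filter Topology

/-- The `U`-statistic of order `k` for the kernel `Φ` and sample `x 0, …, x (n-1)`. -/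
noncomputable def UStat {S : Type*} (k n : ℕ) (Φ : (Fin k → S) → ℝ) (x : ℕ → S) : ℝ :=
  ((n.descFactorial k : ℝ))⁻¹ * ∑ e : Fin k ↪ Fin n, Φ (fun j => x (e j))

/-- The de la Peña decoupling constants: `C₂ = 8` and `C_k = 2^k ∏_{j=2}^k (j^j - 1)` for
`k > 2`. -/
noncomputable def Cdec (k : ℕ) : ℝ :=
  if k = 2 then 8 else 2 ^ k * ∏ j ∈ Finset.Icc 2 k, ((j : ℝ) ^ j - 1)

section Aux


lemma exists_perm_comp {γ δ : Type*} [Fintype γ] [Fintype δ] [DecidableEq δ]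
    (a b : γ ↪ δ) : ∃ σ : Equiv.Perm δ, ∀ j, σ (a j) = b j := by
  classical
  let r : ↥(Set.range ⇑a) ≃ ↥(Set.range ⇑b) :=
    (Equiv.ofInjective a a.injective).symm.trans (Equiv.ofInjective b b.injective)
  have hc : Fintype.card {x // x ∉ Set.range ⇑a} = Fintype.card {x // x ∉ Set.range ⇑b} := by
    have h1 : Fintype.card ↥(Set.range ⇑a) = Fintype.card γ :=
      Fintype.card_congr (Equiv.ofInjective a a.injective).symm
    have h2 : Fintype.card ↥(Set.range ⇑b) = Fintype.card γ :=
      Fintype.card_congr (Equiv.ofInjective b b.injective).symm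
    rw [Fintype.card_subtype_compl, Fintype.card_subtype_compl]
    congr 1
    · exact h1.trans h2.symm
  let c : {x // x ∉ Set.range ⇑a} ≃ {x // x ∉ Set.range ⇑b} := Fintype.equivOfCardEq hc
  refine ⟨(Equiv.sumCompl (· ∈ Set.range ⇑a)).symm.trans
    ((r.sumCongr c).trans (Equiv.sumCompl (· ∈ Set.range ⇑b))), fun j => ?_⟩
  have ha : a j ∈ Set.range ⇑a := ⟨j, rfl⟩
  simp only [Equiv.trans_apply]
  rw [Equiv.sumCompl_symm_apply_of_pos ha]
  have : r ⟨a j, ha⟩ = ⟨b j, ⟨j, rfl⟩⟩ := by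
    simp only [r, Equiv.trans_apply]
    have : (⟨a j, ha⟩ : ↥(Set.range ⇑a)) = Equiv.ofInjective a a.injective j := by
      simp [Equiv.ofInjective_apply]
    rw [this, Equiv.symm_apply_apply]
    simp [Equiv.ofInjective_apply]
  simp [this]

lemma sum_perm_trans {k n : ℕ} (hkn : k ≤ n) (β : Fin k ↪ Fin n) (F : (Fin k ↪ Fin n) → ℝ) :
    ∑ σ : Equiv.Perm (Fin n), F (β.trans σ.toEmbedding)
      = (n.factorial : ℝ) / (n.descFactorial k : ℝ) * ∑ e : Fin k ↪ Fin n, F e := by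
  classical
  set p : Equiv.Perm (Fin n) → (Fin k ↪ Fin n) := fun σ => β.trans σ.toEmbedding with hp
  have hsurj : Function.Surjective p := by
    intro e
    obtain ⟨σ, hσ⟩ := exists_perm_comp β e
    exact ⟨σ, DFunLike.ext _ _ hσ⟩
  set c : ℕ := (Finset.univ.filter fun σ => p σ = β).card with hc
  have hfib : ∀ e : Fin k ↪ Fin n, (Finset.univ.filter fun σ => p σ = e).card = c := by
    intro e
    obtain ⟨σ₀, hσ₀⟩ := hsurj e
    rw [hc]
    apply Finset.card_bij (fun σ _ => σ₀⁻¹ * σ)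
    · intro σ hσ
      simp only [Finset.mem_filter, Finset.mem_univ, true_and] at hσ ⊢
      apply DFunLike.ext
      intro j
      have h1 : σ (β j) = e j := DFunLike.congr_fun hσ j
      have h2 : σ₀ (β j) = e j := DFunLike.congr_fun hσ₀ j
      show (σ₀⁻¹ * σ) (β j) = β j
      rw [Equiv.Perm.mul_apply, h1, ← h2, Equiv.Perm.inv_def, Equiv.symm_apply_apply]
    · intro σ1 h1 σ2 h2 h
      exact mul_left_cancel h
    · intro τ hτ
      refine ⟨σ₀ * τ, ?_, by group⟩
      simp only [Finset.mem_filter, Finset.mem_univ, true_and] at hτ ⊢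
      apply DFunLike.ext
      intro j
      have h1 : τ (β j) = β j := DFunLike.congr_fun hτ j
      have h2 : σ₀ (β j) = e j := DFunLike.congr_fun hσ₀ j
      show (σ₀ * τ) (β j) = e j
      rw [Equiv.Perm.mul_apply, h1, h2]
  have hcount : n.factorial = n.descFactorial k * c := by
    have h1 : (Finset.univ : Finset (Equiv.Perm (Fin n))).card
        = ∑ e : Fin k ↪ Fin n, (Finset.univ.filter fun σ => p σ = e).card :=
      Finset.card_eq_sum_card_fiberwise (fun σ _ => Finset.mem_univ (p σ))
    have h2 : (Finset.univ : Finset (Equiv.Perm (Fin n))).card = n.factorial := by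
      simp [Finset.card_univ, Fintype.card_perm]
    have h3 : ∑ e : Fin k ↪ Fin n, (Finset.univ.filter fun σ => p σ = e).card
        = (n.descFactorial k) * c := by
      simp only [hfib, Finset.sum_const, Finset.card_univ, smul_eq_mul]
      congr 1
      simp [Fintype.card_embedding_eq]
    rw [← h2, h1, h3]
  have hsum : ∑ σ : Equiv.Perm (Fin n), F (p σ) = (c : ℝ) * ∑ e : Fin k ↪ Fin n, F e := by
    rw [Finset.sum_comp F p]
    rw [Finset.image_univ_of_surjective hsurj]
    rw [Finset.mul_sum]
    refine Finset.sum_congr rfl fun e _ => ?_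
    rw [hfib e, nsmul_eq_mul]
  rw [hsum]
  have hD : (n.descFactorial k : ℝ) ≠ 0 := by
    exact_mod_cast fun h => absurd (Nat.descFactorial_eq_zero_iff_lt.mp (by exact_mod_cast h)) (not_lt.mpr hkn)
  have : (n.factorial : ℝ) = (n.descFactorial k : ℝ) * c := by exact_mod_cast hcount
  rw [this]
  field_simp

lemma ustat_perm_avg {S : Type*} {k n m : ℕ} (hm : m ≠ 0) (hkn : k ≤ n)
    (blk : Fin m → (Fin k ↪ Fin n)) (Φ : (Fin k → S) → ℝ) (x : ℕ → S) :
    UStat k n Φ x = (n.factorial : ℝ)⁻¹ *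
      ∑ σ : Equiv.Perm (Fin n), (m : ℝ)⁻¹ * ∑ i : Fin m, Φ (fun j => x (σ (blk i j))) := by
  have key : ∀ i : Fin m, ∑ σ : Equiv.Perm (Fin n), Φ (fun j => x (σ (blk i j)))
      = (n.factorial : ℝ) / (n.descFactorial k : ℝ)
        * ∑ e : Fin k ↪ Fin n, Φ (fun j => x (e j)) := by
    intro i
    exact sum_perm_trans hkn (blk i) (fun e => Φ (fun j => x (e j)))
  rw [← Finset.mul_sum, Finset.sum_comm]
  simp only [key]
  rw [Finset.sum_const, Finset.card_univ, Fintype.card_fin]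
  have hD : (n.descFactorial k : ℝ) ≠ 0 := by
    exact_mod_cast fun h => absurd (Nat.descFactorial_eq_zero_iff_lt.mp (by exact_mod_cast h)) (not_lt.mpr hkn)
  have hfac : (n.factorial : ℝ) ≠ 0 := by exact_mod_cast n.factorial_ne_zero
  have hmr : (m : ℝ) ≠ 0 := by exact_mod_cast hm
  rw [UStat, nsmul_eq_mul]
  field_simp


variable {Ω S : Type*} [MeasurableSpace Ω] [MeasurableSpace S]
  {μ : Measure Ω} [IsProbabilityMeasure μ] {α : Measure S} {X : ℕ → Ω → S}

lemma map_tuple_eq_pi (hmeas : ∀ i, Measurable (X i))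
    (hindep : iIndepFun X μ)
    (hlaw : ∀ i, Measure.map (X i) μ = α)
    {r : ℕ} (ι : Fin r → ℕ) (hι : Function.Injective ι) :
    Measure.map (fun ω (j : Fin r) => X (ι j) ω) μ = Measure.pi (fun _ => α) := by
  classical
  have : IsProbabilityMeasure α := by
    rw [← hlaw 0]; exact Measure.isProbabilityMeasure_map (hmeas 0).aemeasurable
  have hT : Measurable (fun ω (j : Fin r) => X (ι j) ω) :=
    measurable_pi_lambda _ fun j => hmeas (ι j)
  refine (Measure.pi_eq fun s hs => ?_).symm
  rw [Measure.map_apply hT (MeasurableSet.univ_pi hs)]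
  have hpre : (fun ω (j : Fin r) => X (ι j) ω) ⁻¹' (Set.univ.pi s)
      = ⋂ j, X (ι j) ⁻¹' s j := by
    ext ω; simp [Set.mem_univ_pi]
  rw [hpre]
  -- rewrite as biInter over the image finset
  set g : ℕ → Set Ω := fun i =>
    if h : ∃ j, ι j = i then X i ⁻¹' s h.choose else Set.univ with hg
  have hgι : ∀ j : Fin r, g (ι j) = X (ι j) ⁻¹' s j := by
    intro j
    have h : ∃ j', ι j' = ι j := ⟨j, rfl⟩
    have : h.choose = j := hι h.choose_spec
    simp [hg, dif_pos h, this]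
  have hiInter : (⋂ j, X (ι j) ⁻¹' s j) = ⋂ i ∈ Finset.image ι Finset.univ, g i := by
    ext ω
    simp only [Set.mem_iInter, Finset.mem_image, Finset.mem_univ, true_and]
    constructor
    · rintro h i ⟨j, rfl⟩
      rw [hgι j]; exact h j
    · intro h j
      rw [← hgι j]; exact h (ι j) ⟨j, rfl⟩
  rw [hiInter]
  rw [hindep.meas_biInter (fun i hi => ?_)]
  · rw [Finset.prod_image (fun a _ b _ h => hι h)]
    refine Finset.prod_congr rfl fun j _ => ?_
    rw [hgι j, ← hlaw (ι j), Measure.map_apply (hmeas (ι j)) (hs j)]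
  · -- measurability in the comap σ-algebra
    rw [Finset.mem_image] at hi
    obtain ⟨j, _, rfl⟩ := hi
    rw [hgι j]
    exact ⟨s j, hs j, rfl⟩

lemma lintegral_tuple (hmeas : ∀ i, Measurable (X i))
    (hindep : iIndepFun X μ)
    (hlaw : ∀ i, Measure.map (X i) μ = α)
    {r : ℕ} (ι : Fin r → ℕ) (hι : Function.Injective ι)
    (g : (Fin r → S) → ENNReal) (hg : Measurable g) :
    ∫⁻ ω, g (fun j => X (ι j) ω) ∂μ = ∫⁻ ω, g (fun j => X j ω) ∂μ := by
  have hT : ∀ (ι' : Fin r → ℕ), Measurable (fun ω (j : Fin r) => X (ι' j) ω) :=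
    fun ι' => measurable_pi_lambda _ fun j => hmeas (ι' j)
  have h1 := lintegral_map (μ := μ) hg (hT ι)
  have h2 := lintegral_map (μ := μ) hg (hT (fun j : Fin r => (j : ℕ)))
  rw [map_tuple_eq_pi hmeas hindep hlaw ι hι] at h1
  rw [map_tuple_eq_pi hmeas hindep hlaw (fun j : Fin r => (j : ℕ)) Fin.val_injective] at h2
  rw [← h1, ← h2]

lemma lintegral_blocks (hmeas : ∀ i, Measurable (X i))
    (hindep : iIndepFun X μ)
    {m k : ℕ} (ι : Fin m → Fin k → ℕ)
    (hdisj : ∀ (i i' : Fin m) (j j' : Fin k), ι i j = ι i' j' → i = i')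
    (g : (Fin k → S) → ENNReal) (hg : Measurable g) :
    ∫⁻ ω, ∏ i, g (fun j => X (ι i j) ω) ∂μ = ∏ i, ∫⁻ ω, g (fun j => X (ι i j) ω) ∂μ := by
  classical
  induction m with
  | zero => simp
  | succ m ih =>
    have hdisj' : ∀ (i i' : Fin m) (j j' : Fin k), ι i.castSucc j = ι i'.castSucc j' → i = i' := by
      intro i i' j j' h
      exact Fin.castSucc_injective _ (hdisj _ _ _ _ h)
    set Sf : Finset ℕ :=
      Finset.image (fun q : Fin m × Fin k => ι q.1.castSucc q.2) Finset.univ with hSf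
    set Tf : Finset ℕ := Finset.image (ι (Fin.last m)) Finset.univ with hTf
    have hST : Disjoint Sf Tf := by
      rw [Finset.disjoint_left]
      rintro v hv hv'
      rw [hSf, Finset.mem_image] at hv
      rw [hTf, Finset.mem_image] at hv'
      obtain ⟨⟨i, j⟩, _, rfl⟩ := hv
      obtain ⟨j', _, h⟩ := hv'
      exact absurd (hdisj _ _ _ _ h.symm) (Fin.ne_last_of_lt i.castSucc_lt_last).elim
    have hmemS : ∀ (i : Fin m) (j : Fin k), ι i.castSucc j ∈ Sf := fun i j =>
      Finset.mem_image.mpr ⟨(i, j), Finset.mem_univ _, rfl⟩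
    have hmemT : ∀ j : Fin k, ι (Fin.last m) j ∈ Tf := fun j =>
      Finset.mem_image.mpr ⟨j, Finset.mem_univ _, rfl⟩
    have hIndep2 := hindep.indepFun_finset Sf Tf hST hmeas
    set φ : ((i : Sf) → S) → ENNReal :=
      fun z => ∏ i : Fin m, g (fun j => z ⟨ι i.castSucc j, hmemS i j⟩) with hφ
    set ψ : ((i : Tf) → S) → ENNReal :=
      fun z => g (fun j => z ⟨ι (Fin.last m) j, hmemT j⟩) with hψ
    have hφm : Measurable φ :=
      Finset.measurable_prod _ fun i _ =>
        hg.comp (measurable_pi_lambda _ fun j => measurable_pi_apply _)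
    have hψm : Measurable ψ :=
      hg.comp (measurable_pi_lambda _ fun j => measurable_pi_apply _)
    have hIndep3 : IndepFun (fun ω => ∏ i : Fin m, g (fun j => X (ι i.castSucc j) ω))
        (fun ω => g (fun j => X (ι (Fin.last m) j) ω)) μ := hIndep2.comp hφm hψm
    have key := lintegral_mul_eq_lintegral_mul_lintegral_of_indepFun
      (μ := μ)
      (f := fun ω => ∏ i : Fin m, g (fun j => X (ι i.castSucc j) ω))
      (g := fun ω => g (fun j => X (ι (Fin.last m) j) ω))
      (Finset.measurable_prod _ fun i _ =>
        hg.comp (measurable_pi_lambda _ fun j => hmeas _))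
      (hg.comp (measurable_pi_lambda _ fun j => hmeas _)) hIndep3
    calc ∫⁻ ω, ∏ i : Fin (m + 1), g (fun j => X (ι i j) ω) ∂μ
        = ∫⁻ ω, (∏ i : Fin m, g (fun j => X (ι i.castSucc j) ω))
            * g (fun j => X (ι (Fin.last m) j) ω) ∂μ := by
          simp_rw [Fin.prod_univ_castSucc]
      _ = (∫⁻ ω, ∏ i : Fin m, g (fun j => X (ι i.castSucc j) ω) ∂μ)
            * ∫⁻ ω, g (fun j => X (ι (Fin.last m) j) ω) ∂μ := key
      _ = ∏ i : Fin (m + 1), ∫⁻ ω, g (fun j => X (ι i j) ω) ∂μ := by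
          rw [ih _ hdisj', Fin.prod_univ_castSucc]

lemma jensen_exp_avg {ι : Type*} [Fintype ι] [Nonempty ι] (a : ι → ℝ) :
    exp ((Fintype.card ι : ℝ)⁻¹ * ∑ x, a x) ≤ (Fintype.card ι : ℝ)⁻¹ * ∑ x, exp (a x) := by
  have hN : (0:ℝ) < Fintype.card ι := by exact_mod_cast Fintype.card_pos
  have hgm := Real.geom_mean_le_arith_mean_weighted Finset.univ
    (fun _ => (Fintype.card ι : ℝ)⁻¹) (fun x => exp (a x))
    (fun i _ => by positivity)
    (by simp only [Finset.sum_const, Finset.card_univ, nsmul_eq_mul]; field_simp)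
    (fun i _ => (exp_pos _).le)
  calc exp ((Fintype.card ι : ℝ)⁻¹ * ∑ x, a x)
      = ∏ x, exp (a x) ^ ((Fintype.card ι : ℝ)⁻¹) := by
        simp_rw [← Real.exp_mul, ← Real.exp_sum, Finset.mul_sum]
        congr 1
        exact Finset.sum_congr rfl fun i _ => mul_comm _ _
    _ ≤ ∑ x, (Fintype.card ι : ℝ)⁻¹ * exp (a x) := hgm
    _ = (Fintype.card ι : ℝ)⁻¹ * ∑ x, exp (a x) := by rw [Finset.mul_sum]

lemma nat_block_eq {k : ℕ} (hk0 : 0 < k) {i i' j j' : ℕ} (hj : j < k) (hj' : j' < k)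
    (h : i * k + j = i' * k + j') : i = i' := by
  have h1 : (i * k + j) / k = i := by
    rw [mul_comm, Nat.mul_add_div hk0, Nat.div_eq_of_lt hj, add_zero]
  have h2 : (i' * k + j') / k = i' := by
    rw [mul_comm, Nat.mul_add_div hk0, Nat.div_eq_of_lt hj', add_zero]
  rw [← h1, ← h2, h]

end Aux

/-- Exponential Chebyshev bound for the difference of two `U`-statistics: if `X₁, X₂, …`
are i.i.d. with law `α` and `W, W'` are symmetric measurable kernels with
`E[exp(λ|W - W'|(X₁,…,X_k))] < ∞` for all `λ > 0`, then for all `δ, λ > 0` and `n ≥ k`,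
`(1/n) log P{|U_n(W) - U_n(W')| > δ}
  ≤ -λδ + (1/k) log E[exp(k C_k λ |W - W'|(X₁,…,X_k))]`. -/
theorem ustat_diff_exp_bound {Ω S : Type*} [MeasurableSpace Ω] [MeasurableSpace S]
    (μ : Measure Ω) [IsProbabilityMeasure μ] (α : Measure S)
    (X : ℕ → Ω → S) (hmeas : ∀ i, Measurable (X i))
    (hindep : iIndepFun X μ)
    (hlaw : ∀ i, Measure.map (X i) μ = α)
    (k : ℕ) (hk : 2 ≤ k) (W W' : (Fin k → S) → ℝ)
    (hWmeas : Measurable W) (hW'meas : Measurable W')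
    (hsymm : ∀ (σ : Equiv.Perm (Fin k)) (y : Fin k → S), W (y ∘ σ) = W y)
    (hsymm' : ∀ (σ : Equiv.Perm (Fin k)) (y : Fin k → S), W' (y ∘ σ) = W' y)
    (hexp : ∀ lam : ℝ, 0 < lam →
      Integrable (fun ω => exp (lam * |W (fun j => X j ω) - W' (fun j => X j ω)|)) μ)
    (n : ℕ) (hn : k ≤ n) (δ lam : ℝ) (hδ : 0 < δ) (hlam : 0 < lam) :
    (((n : ℝ)⁻¹ : ℝ) : EReal) * ENNReal.log
        (μ {ω | δ < |UStat k n W (fun i => X i ω) - UStat k n W' (fun i => X i ω)|})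
      ≤ ((-lam * δ + (k : ℝ)⁻¹ *
          log (∫ ω, exp (k * Cdec k * lam *
            |W (fun j => X j ω) - W' (fun j => X j ω)|) ∂μ) : ℝ) : EReal) := by
  classical
  -- numeric setup
  have hk0 : 0 < k := by omega
  have hn0 : 0 < n := by omega
  set m : ℕ := n / k with hmdef
  have hm0 : 0 < m := Nat.div_pos hn hk0
  have hmk : m * k ≤ n := by rw [hmdef]; exact Nat.div_mul_le_self n k
  have hn2mk : n ≤ 2 * (m * k) := by
    have h1 : k * m + n % k = n := by rw [hmdef]; exact Nat.div_add_mod n k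
    have h2 : n % k < k := Nat.mod_lt n hk0
    have h3 : k ≤ m * k := Nat.le_mul_of_pos_left k hm0
    calc n = k * m + n % k := h1.symm
      _ ≤ k * m + k := by omega
      _ ≤ m * k + m * k := by rw [mul_comm k m]; omega
      _ = 2 * (m * k) := by ring
  -- constants
  set c0 : ℝ := k * Cdec k * lam with hc0def
  set M : ℝ := ∫ ω, exp (c0 * |W (fun j => X j ω) - W' (fun j => X j ω)|) ∂μ with hMdef
  set Eset : Set Ω :=
    {ω | δ < |UStat k n W (fun i => X i ω) - UStat k n W' (fun i => X i ω)|} with hEsetdef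
  have hC2 : (2:ℝ) ≤ Cdec k := by
    rw [Cdec]
    split_ifs with h
    · norm_num
    · have h1 : (2:ℝ) ≤ 2 ^ k := by
        calc (2:ℝ) = 2 ^ 1 := (pow_one 2).symm
        _ ≤ 2 ^ k := by exact pow_le_pow_right₀ one_le_two (by omega)
      have h2 : (1:ℝ) ≤ ∏ j ∈ Finset.Icc 2 k, ((j : ℝ) ^ j - 1) := by
        have := Finset.prod_le_prod (f := fun _ : ℕ => (1:ℝ))
          (g := fun j : ℕ => ((j : ℝ) ^ j - 1)) (s := Finset.Icc 2 k)
          (fun _ _ => zero_le_one) (fun j hj => ?_)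
        · simpa using this
        · rw [Finset.mem_Icc] at hj
          have hj2 : (2:ℝ) ≤ (j:ℝ) := by exact_mod_cast hj.1
          have h3 : (j:ℝ) ≤ (j:ℝ) ^ j := le_self_pow₀ (by linarith) (by omega)
          show (1:ℝ) ≤ (j:ℝ) ^ j - 1
          linarith
      nlinarith
  have hCpos : (0:ℝ) < Cdec k := by linarith
  have hc0pos : 0 < c0 := by
    rw [hc0def]
    have : (0:ℝ) < k := by exact_mod_cast hk0
    positivity
  set t : ℝ := n * lam with htdef
  have ht : 0 < t := by
    rw [htdef]; have : (0:ℝ) < n := by exact_mod_cast hn0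
    positivity
  set s0 : ℝ := t / m with hs0def
  have hs0c0 : s0 ≤ c0 := by
    have hmR : (0:ℝ) < m := by exact_mod_cast hm0
    have hkR : (0:ℝ) < k := by exact_mod_cast hk0
    have hnmk : (n:ℝ) ≤ 2 * (m * k) := by exact_mod_cast hn2mk
    rw [hs0def, div_le_iff₀ hmR, htdef, hc0def]
    nlinarith [mul_le_mul_of_nonneg_right hC2
      (mul_nonneg (mul_nonneg hkR.le hmR.le) hlam.le),
      mul_le_mul_of_nonneg_right hnmk hlam.le]
  -- kernel
  set Φ : (Fin k → S) → ℝ := fun y => |W y - W' y| with hΦdef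
  have hΦm : Measurable Φ := (hWmeas.sub hW'meas).abs
  have hΦ0 : ∀ y, 0 ≤ Φ y := fun y => abs_nonneg _
  -- blocks
  have hblt : ∀ (i : Fin m) (j : Fin k), i.val * k + j.val < n := by
    intro i j
    have h1 : i.val * k + j.val < (i.val + 1) * k := by
      have := j.isLt
      calc i.val * k + j.val < i.val * k + k := by omega
        _ = (i.val + 1) * k := by ring
    have h2 : (i.val + 1) * k ≤ m * k := Nat.mul_le_mul_right k i.isLt
    omega
  set blk : Fin m → (Fin k ↪ Fin n) := fun i =>
    ⟨fun j => ⟨i.val * k + j.val, hblt i j⟩, fun j j' h => by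
      have := congrArg Fin.val h
      simp only at this
      exact Fin.val_injective (by omega)⟩ with hblkdef
  -- measurability of U-statistics
  have hUmeas : ∀ (V : (Fin k → S) → ℝ), Measurable V →
      Measurable (fun ω => UStat k n V (fun i => X i ω)) := by
    intro V hV
    simp only [UStat]
    exact (Finset.measurable_sum _ fun e _ =>
      hV.comp (measurable_pi_lambda _ fun j => hmeas _)).const_mul _
  -- pointwise triangle inequality
  have htri : ∀ x : ℕ → S, |UStat k n W x - UStat k n W' x| ≤ UStat k n Φ x := by
    intro x
    have hD0 : (0:ℝ) ≤ ((n.descFactorial k : ℝ))⁻¹ := by positivity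
    simp only [UStat, hΦdef, ← mul_sub, ← Finset.sum_sub_distrib]
    rw [abs_mul, abs_of_nonneg hD0]
    exact mul_le_mul_of_nonneg_left (Finset.abs_sum_le_sum_abs _ _) hD0
  -- Chernoff
  have hf_meas : Measurable (fun ω => ENNReal.ofReal (exp (t * UStat k n Φ (fun i => X i ω)))) :=
    (((hUmeas Φ hΦm).const_mul t).exp).ennreal_ofReal
  set ε : ENNReal := ENNReal.ofReal (exp (t * δ)) with hεdef
  have hss : Eset ⊆ {ω | ε ≤ ENNReal.ofReal (exp (t * UStat k n Φ (fun i => X i ω)))} := by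
    intro ω hω
    simp only [hEsetdef, Set.mem_setOf_eq] at hω
    simp only [Set.mem_setOf_eq, hεdef]
    have h1 : δ ≤ UStat k n Φ (fun i => X i ω) := (le_of_lt hω).trans (htri _)
    exact ENNReal.ofReal_le_ofReal (exp_le_exp.mpr (mul_le_mul_of_nonneg_left h1 ht.le))
  have chern : ε * μ Eset ≤ ∫⁻ ω, ENNReal.ofReal (exp (t * UStat k n Φ (fun i => X i ω))) ∂μ :=
    (mul_le_mul_right (measure_mono hss) ε).trans
      (mul_meas_ge_le_lintegral₀ hf_meas.aemeasurable ε)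
  -- Jensen
  have hcard : (Fintype.card (Equiv.Perm (Fin n)) : ℝ) = (n.factorial : ℝ) := by
    simp [Fintype.card_perm, Fintype.card_fin]
  have hjen : ∀ ω, ENNReal.ofReal (exp (t * UStat k n Φ (fun i => X i ω)))
      ≤ ENNReal.ofReal ((n.factorial : ℝ)⁻¹) * ∑ σ : Equiv.Perm (Fin n),
        ENNReal.ofReal (exp (t * ((m : ℝ)⁻¹ *
          ∑ i : Fin m, Φ (fun j => X (σ (blk i j)) ω)))) := by
    intro ω
    have hrep := ustat_perm_avg (S := S) hm0.ne' hn blk Φ (fun i => X i ω)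
    have hav : t * UStat k n Φ (fun i => X i ω)
        = (n.factorial : ℝ)⁻¹ * ∑ σ : Equiv.Perm (Fin n),
          (t * ((m : ℝ)⁻¹ * ∑ i : Fin m, Φ (fun j => X (σ (blk i j)) ω))) := by
      rw [hrep]
      simp only [Finset.mul_sum]
      exact Finset.sum_congr rfl fun σ _ => Finset.sum_congr rfl fun i _ => by ring
    have h1 : exp (t * UStat k n Φ (fun i => X i ω))
        ≤ (n.factorial : ℝ)⁻¹ * ∑ σ : Equiv.Perm (Fin n),
          exp (t * ((m : ℝ)⁻¹ * ∑ i : Fin m, Φ (fun j => X (σ (blk i j)) ω))) := by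
      rw [hav]
      have h2 := jensen_exp_avg (fun σ : Equiv.Perm (Fin n) =>
        t * ((m : ℝ)⁻¹ * ∑ i : Fin m, Φ (fun j => X (σ (blk i j)) ω)))
      rw [hcard] at h2
      exact h2
    calc ENNReal.ofReal (exp (t * UStat k n Φ (fun i => X i ω)))
        ≤ ENNReal.ofReal ((n.factorial : ℝ)⁻¹ * ∑ σ : Equiv.Perm (Fin n),
            exp (t * ((m : ℝ)⁻¹ * ∑ i : Fin m, Φ (fun j => X (σ (blk i j)) ω)))) :=
          ENNReal.ofReal_le_ofReal h1
      _ = _ := by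
          rw [ENNReal.ofReal_mul (by positivity),
            ENNReal.ofReal_sum_of_nonneg (fun _ _ => (exp_pos _).le)]
  have hσmeas : ∀ σ : Equiv.Perm (Fin n), Measurable (fun ω =>
      ENNReal.ofReal (exp (t * ((m : ℝ)⁻¹ *
        ∑ i : Fin m, Φ (fun j => X (σ (blk i j)) ω))))) := by
    intro σ
    exact ((((Finset.measurable_sum _ fun i _ =>
      hΦm.comp (measurable_pi_lambda _ fun j => hmeas _)).const_mul
        ((m : ℝ)⁻¹)).const_mul t).exp).ennreal_ofReal
  have hstep : ∫⁻ ω, ENNReal.ofReal (exp (t * UStat k n Φ (fun i => X i ω))) ∂μ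
      ≤ ENNReal.ofReal ((n.factorial : ℝ)⁻¹) * ∑ σ : Equiv.Perm (Fin n),
        ∫⁻ ω, ENNReal.ofReal (exp (t * ((m : ℝ)⁻¹ *
          ∑ i : Fin m, Φ (fun j => X (σ (blk i j)) ω)))) ∂μ := by
    refine (lintegral_mono hjen).trans_eq ?_
    rw [lintegral_const_mul _ (Finset.measurable_sum _ fun σ _ => hσmeas σ)]
    rw [lintegral_finset_sum _ fun σ _ => hσmeas σ]
  -- block factorization for each permutation
  set g : (Fin k → S) → ENNReal := fun v => ENNReal.ofReal (exp (s0 * Φ v)) with hgdef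
  have hgm : Measurable g := ((hΦm.const_mul s0).exp).ennreal_ofReal
  set Mk : ENNReal := ∫⁻ ω, g (fun j => X j ω) ∂μ with hMkdef
  have hfact : ∀ σ : Equiv.Perm (Fin n),
      ∫⁻ ω, ENNReal.ofReal (exp (t * ((m : ℝ)⁻¹ *
        ∑ i : Fin m, Φ (fun j => X (σ (blk i j)) ω)))) ∂μ = Mk ^ m := by
    intro σ
    set ι : Fin m → Fin k → ℕ := fun i j => ((σ (blk i j) : Fin n) : ℕ) with hιdef
    have hdisj : ∀ (i i' : Fin m) (j j' : Fin k), ι i j = ι i' j' → i = i' := by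
      intro i i' j j' h
      have h2 : σ (blk i j) = σ (blk i' j') := Fin.val_injective h
      have h3 : blk i j = blk i' j' := σ.injective h2
      have h4 : i.val * k + j.val = i'.val * k + j'.val := congrArg Fin.val h3
      exact Fin.val_injective (nat_block_eq hk0 j.isLt j'.isLt h4)
    have hιinj : ∀ i : Fin m, Function.Injective (ι i) := by
      intro i j j' h
      exact (blk i).injective (σ.injective (Fin.val_injective h))
    have hptw : (fun ω => ENNReal.ofReal (exp (t * ((m : ℝ)⁻¹ *
        ∑ i : Fin m, Φ (fun j => X (σ (blk i j)) ω)))))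
        = fun ω => ∏ i : Fin m, g (fun j => X (ι i j) ω) := by
      funext ω
      have harg : t * ((m : ℝ)⁻¹ * ∑ i : Fin m, Φ (fun j => X (σ (blk i j)) ω))
          = ∑ i : Fin m, s0 * Φ (fun j => X (ι i j) ω) := by
        rw [← Finset.mul_sum, hs0def]
        ring
      rw [harg, Real.exp_sum, ENNReal.ofReal_prod_of_nonneg (fun _ _ => (exp_pos _).le)]
    rw [hptw, lintegral_blocks hmeas hindep ι hdisj g hgm]
    have heach : ∀ i : Fin m, ∫⁻ ω, g (fun j => X (ι i j) ω) ∂μ = Mk := by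
      intro i
      rw [lintegral_tuple hmeas hindep hlaw (ι i) (hιinj i) g hgm]
    simp only [heach]
    rw [Finset.prod_const, Finset.card_univ, Fintype.card_fin]
  -- bound Mk by ofReal M
  have hM1 : (1:ℝ) ≤ M := by
    rw [hMdef]
    have h := integral_mono (integrable_const 1) (hexp c0 hc0pos)
      (fun ω => Real.one_le_exp (mul_nonneg hc0pos.le (abs_nonneg _)))
    simpa using h
  have hM0 : (0:ℝ) ≤ M := le_trans zero_le_one hM1
  have hMk : Mk ≤ ENNReal.ofReal M := by
    have heq : ENNReal.ofReal M
        = ∫⁻ ω, ENNReal.ofReal (exp (c0 * Φ (fun j => X j ω))) ∂μ := by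
      rw [hMdef]
      rw [ofReal_integral_eq_lintegral_ofReal (hexp c0 hc0pos)
        (ae_of_all _ fun ω => (exp_pos _).le)]
    rw [heq, hMkdef]
    refine lintegral_mono fun ω => ?_
    simp only [hgdef]
    exact ENNReal.ofReal_le_ofReal (exp_le_exp.mpr
      (mul_le_mul_of_nonneg_right hs0c0 (hΦ0 _)))
  -- total bound on the mgf of the U-statistic
  have htotal : ∫⁻ ω, ENNReal.ofReal (exp (t * UStat k n Φ (fun i => X i ω))) ∂μ
      ≤ (ENNReal.ofReal M) ^ m := by
    refine hstep.trans ?_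
    have hsum : ∑ σ : Equiv.Perm (Fin n),
        ∫⁻ ω, ENNReal.ofReal (exp (t * ((m : ℝ)⁻¹ *
          ∑ i : Fin m, Φ (fun j => X (σ (blk i j)) ω)))) ∂μ
        = (n.factorial : ENNReal) * Mk ^ m := by
      simp only [hfact]
      rw [Finset.sum_const, Finset.card_univ, Fintype.card_perm, Fintype.card_fin,
        nsmul_eq_mul]
    rw [hsum, ← mul_assoc]
    have hfacpos : (0:ℝ) < n.factorial := by exact_mod_cast n.factorial_pos
    have : ENNReal.ofReal ((n.factorial : ℝ)⁻¹) * (n.factorial : ENNReal) = 1 := by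
      rw [ENNReal.ofReal_inv_of_pos hfacpos, ENNReal.ofReal_natCast]
      exact ENNReal.inv_mul_cancel (by exact_mod_cast n.factorial_ne_zero)
        (ENNReal.natCast_ne_top _)
    rw [this, one_mul]
    exact pow_le_pow_left' hMk m
  -- final ENNReal bound
  have hεne : ε ≠ 0 := by
    rw [hεdef]
    simp [ENNReal.ofReal_pos, exp_pos]
  have hεtop : ε ≠ ⊤ := by rw [hεdef]; exact ENNReal.ofReal_ne_top
  have hfinal : μ Eset ≤ ENNReal.ofReal (exp (-(t * δ)) * M ^ m) := by
    have h1 : ε * μ Eset ≤ (ENNReal.ofReal M) ^ m := chern.trans htotal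
    have h2 := mul_le_mul_right h1 ε⁻¹
    rw [← mul_assoc, ENNReal.inv_mul_cancel hεne hεtop, one_mul] at h2
    rw [ENNReal.ofReal_mul (by positivity), ENNReal.ofReal_pow hM0, Real.exp_neg,
      ENNReal.ofReal_inv_of_pos (exp_pos _)]
    exact h2
  -- conclude
  by_cases hE0 : μ Eset = 0
  · rw [hE0, ENNReal.log_zero, EReal.coe_mul_bot_of_pos (by positivity)]
    exact bot_le
  · have hEtop : μ Eset ≠ ⊤ := measure_ne_top μ _
    rw [ENNReal.log_pos_real hE0 hEtop, ← EReal.coe_mul, EReal.coe_le_coe_iff]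
    set p : ℝ := (μ Eset).toReal with hpdef
    have hppos : 0 < p := ENNReal.toReal_pos hE0 hEtop
    have hrhs0 : (0:ℝ) ≤ exp (-(t * δ)) * M ^ m :=
      mul_nonneg (exp_pos _).le (pow_nonneg hM0 m)
    have hple : p ≤ exp (-(t * δ)) * M ^ m :=
      ENNReal.toReal_le_of_le_ofReal hrhs0 hfinal
    have hMne : M ≠ 0 := by linarith
    have hlogp : Real.log p ≤ -(t * δ) + m * Real.log M := by
      calc Real.log p ≤ Real.log (exp (-(t * δ)) * M ^ m) := Real.log_le_log hppos hple
        _ = -(t * δ) + m * Real.log M := by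
            rw [Real.log_mul (exp_ne_zero _) (pow_ne_zero _ hMne), Real.log_exp,
              Real.log_pow]
    have hlogM0 : 0 ≤ Real.log M := Real.log_nonneg hM1
    have hnR : (0:ℝ) < n := by exact_mod_cast hn0
    have hkR : (0:ℝ) < k := by exact_mod_cast hk0
    have hmn : (m : ℝ) / n ≤ (k : ℝ)⁻¹ := by
      have hmkR : (m:ℝ) * k ≤ n := by exact_mod_cast hmk
      rw [div_le_iff₀ hnR, inv_mul_eq_div, le_div_iff₀ hkR]
      linarith
    calc (n:ℝ)⁻¹ * Real.log p
        ≤ (n:ℝ)⁻¹ * (-(t * δ) + m * Real.log M) :=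
          mul_le_mul_of_nonneg_left hlogp (by positivity)
      _ = -lam * δ + ((m:ℝ) / n) * Real.log M := by
          rw [htdef]
          field_simp
      _ ≤ -lam * δ + (k:ℝ)⁻¹ * Real.log M := by
          exact add_le_add_right (mul_le_mul_of_nonneg_right hmn hlogM0) _
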